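/- For all integers d ≥ 1 and 0 ≤ ℓ < d, the following identity of formal power series holds: (1−x)^{d+1} · ∑_{t≥1} (2t)^ℓ (2t−1)^{d−ℓ} x^t = x · I_d(A_{d,ℓ}^{(2)}). (Lemma 4.6: here (2t)^ℓ(2t−1)^{d−ℓ} is the number of lattice points of the t-th dilate of the half-open cube [−1,1]^d with the ℓ facets x_d = 1, …, x_{d+1−ℓ} = 1 among its closed facets removed together with all remaining facets removed; the identity expresses h*([−1,1]^d_{2d−ℓ}; x) = I_{d+1} h*([−1,1]^d_ℓ; x) = x·I_d A_{d,ℓ}^{(2)}.) -/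

import Mathlib

open Polynomial PowerSeries

/-- `A` is the `r`-colored `ℓ`-Eulerian polynomial `A_{d,ℓ}^{(r)}`, i.e. the polynomial
satisfying the formal power series identity
`A = (1 - x)^{d+1} * ∑_{t ≥ 0} (r t)^ℓ (r t + 1)^{d - ℓ} x^t`. -/
def IsColoredEulerian (d r ℓ : ℕ) (A : Polynomial ℝ) : Prop :=
  (A : PowerSeries ℝ) =
    (1 - PowerSeries.X) ^ (d + 1) *
      PowerSeries.mk fun t : ℕ => ((r : ℝ) * t) ^ ℓ * ((r : ℝ) * t + 1) ^ (d - ℓ)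


open Finset

/-- Telescoping identity for alternating binomial sums via Pascal's rule. -/
lemma tele_sum (N : ℕ) (h : ℕ → ℝ) :
    ∑ j ∈ Finset.range (N + 2), (-1 : ℝ) ^ j * ((N + 1).choose j : ℝ) * h j =
      ∑ j ∈ Finset.range (N + 1), (-1 : ℝ) ^ j * (N.choose j : ℝ) * (h j - h (j + 1)) := by
  have pas : ∀ j, (((N + 1).choose (j + 1) : ℝ)) = (N.choose j : ℝ) + (N.choose (j + 1) : ℝ) := by
    intro j
    rw [← Nat.cast_add, Nat.choose_succ_succ]
  have e1 : ∀ j ∈ Finset.range (N + 1),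
      (-1 : ℝ) ^ (j + 1) * ((N + 1).choose (j + 1) : ℝ) * h (j + 1) =
        -((-1 : ℝ) ^ j * (N.choose j : ℝ) * h (j + 1)) +
          (-1 : ℝ) ^ (j + 1) * (N.choose (j + 1) : ℝ) * h (j + 1) := by
    intro j _
    rw [pas j]; ring
  have e2 : (∑ j ∈ Finset.range (N + 1), (-1 : ℝ) ^ (j + 1) * (N.choose (j + 1) : ℝ) * h (j + 1)) +
      (-1 : ℝ) ^ 0 * ((N + 1).choose 0 : ℝ) * h 0 =
      ∑ j ∈ Finset.range (N + 2), (-1 : ℝ) ^ j * (N.choose j : ℝ) * h j := by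
    conv_rhs => rw [Finset.sum_range_succ']
    norm_num
  have e3 : (∑ j ∈ Finset.range (N + 2), (-1 : ℝ) ^ j * (N.choose j : ℝ) * h j) =
      ∑ j ∈ Finset.range (N + 1), (-1 : ℝ) ^ j * (N.choose j : ℝ) * h j := by
    rw [Finset.sum_range_succ, Nat.choose_succ_self, Nat.cast_zero, mul_zero, zero_mul, add_zero]
  rw [Finset.sum_range_succ', Finset.sum_congr rfl e1, Finset.sum_add_distrib, add_assoc, e2,
    e3, ← Finset.sum_add_distrib]
  exact Finset.sum_congr rfl fun j _ => by ring

/-- The `N`-th alternating binomial difference of a monomial of degree `< N` vanishes. -/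
lemma mono_diff (N : ℕ) : ∀ k, k < N → ∀ x : ℝ,
    ∑ j ∈ Finset.range (N + 1), (-1 : ℝ) ^ j * (N.choose j : ℝ) * (x - j) ^ k = 0 := by
  induction N with
  | zero => intro k hk; omega
  | succ N ih =>
    intro k hk x
    rw [show N + 1 + 1 = N + 2 from rfl, tele_sum N (fun j => (x - j) ^ k)]
    have key : ∀ j ∈ Finset.range (N + 1),
        (-1 : ℝ) ^ j * (N.choose j : ℝ) * ((x - j) ^ k - (x - ((j : ℕ) + 1 : ℕ)) ^ k) =
          ∑ i ∈ Finset.range k, (k.choose i : ℝ) *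
            ((-1 : ℝ) ^ j * (N.choose j : ℝ) * ((x - 1) - j) ^ i) := by
      intro j _
      have hb : (x - j) ^ k = ∑ i ∈ Finset.range (k + 1),
          ((x - 1) - j) ^ i * (1 : ℝ) ^ (k - i) * (k.choose i : ℝ) := by
        have := add_pow ((x - 1) - (j : ℝ)) 1 k
        rw [show (x - 1) - (j : ℝ) + 1 = x - j by ring] at this
        exact this
      rw [hb, Finset.sum_range_succ]
      simp only [one_pow, mul_one, Nat.choose_self, Nat.cast_one, Nat.cast_add]
      rw [show x - ((j : ℝ) + 1) = x - 1 - j by ring]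
      rw [show (∑ i ∈ Finset.range k, (x - 1 - (j:ℝ)) ^ i * (k.choose i : ℝ)) +
            (x - 1 - (j:ℝ)) ^ k - (x - 1 - (j:ℝ)) ^ k
          = ∑ i ∈ Finset.range k, (x - 1 - (j:ℝ)) ^ i * (k.choose i : ℝ) by ring]
      rw [Finset.mul_sum]
      exact Finset.sum_congr rfl fun i _ => by ring
    rw [Finset.sum_congr rfl key, Finset.sum_comm]
    apply Finset.sum_eq_zero
    intro i hi
    rw [← Finset.mul_sum, ih i (by have := Finset.mem_range.mp hi; omega) (x - 1), mul_zero]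

/-- The `N`-th alternating binomial difference of `(2y+a)^l (2y+b)^m` with `l+m < N` vanishes. -/
lemma prod_diff (N l m : ℕ) (hlm : l + m < N) (a b x : ℝ) :
    ∑ j ∈ Finset.range (N + 1), (-1 : ℝ) ^ j * (N.choose j : ℝ) *
      ((2 * (x - j) + a) ^ l * (2 * (x - j) + b) ^ m) = 0 := by
  have expand : ∀ j ∈ Finset.range (N + 1),
      (-1 : ℝ) ^ j * (N.choose j : ℝ) * ((2 * (x - j) + a) ^ l * (2 * (x - j) + b) ^ m) =
      ∑ i ∈ Finset.range (l + 1), ∑ p ∈ Finset.range (m + 1),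
        (a ^ (l - i) * (l.choose i : ℝ) * b ^ (m - p) * (m.choose p : ℝ) * 2 ^ (i + p)) *
          ((-1 : ℝ) ^ j * (N.choose j : ℝ) * (x - j) ^ (i + p)) := by
    intro j _
    rw [add_pow (2 * (x - (j:ℝ))) a l, add_pow (2 * (x - (j:ℝ))) b m, Finset.sum_mul_sum,
      Finset.mul_sum]
    refine Finset.sum_congr rfl fun i _ => ?_
    rw [Finset.mul_sum]
    exact Finset.sum_congr rfl fun p _ => by simp only [mul_pow]; ring
  rw [Finset.sum_congr rfl expand, Finset.sum_comm]
  refine Finset.sum_eq_zero fun i hi => ?_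
  rw [Finset.sum_comm]
  refine Finset.sum_eq_zero fun p hp => ?_
  rw [← Finset.mul_sum,
    mono_diff N (i + p)
      (by have := Finset.mem_range.mp hi; have := Finset.mem_range.mp hp; omega) x,
    mul_zero]

/-- Coefficients of `(1 - X)^N` as a power series. -/
lemma coeff_one_sub_X_pow (N j : ℕ) :
    PowerSeries.coeff j ((1 - PowerSeries.X) ^ N) = (-1 : ℝ) ^ j * (N.choose j : ℝ) := by
  have h : (1 - PowerSeries.X : PowerSeries ℝ) ^ N =
      ∑ k ∈ Finset.range (N + 1),
        PowerSeries.C ((-1 : ℝ) ^ k * (N.choose k : ℝ)) * PowerSeries.X ^ k := by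
    rw [sub_eq_add_neg, add_comm, add_pow]
    refine Finset.sum_congr rfl fun k _ => ?_
    rw [one_pow, mul_one, neg_pow, map_mul, map_pow, map_neg, map_one, map_natCast]
    ring
  rw [h, map_sum]
  simp only [PowerSeries.coeff_C_mul_X_pow]
  rw [Finset.sum_ite_eq]
  by_cases hj : j ∈ Finset.range (N + 1)
  · simp [hj]
  · rw [if_neg hj, Nat.choose_eq_zero_of_lt (by simpa using hj), Nat.cast_zero, mul_zero]

/-- Coefficients of `(1 - X)^(d+1) * mk h`. -/
lemma coeff_P_mul (d : ℕ) (h : ℕ → ℝ) (n : ℕ) :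
    PowerSeries.coeff n ((1 - PowerSeries.X) ^ (d + 1) * PowerSeries.mk h) =
      ∑ j ∈ Finset.range (n + 1), (-1 : ℝ) ^ j * ((d + 1).choose j : ℝ) * h (n - j) := by
  rw [PowerSeries.coeff_mul, Finset.Nat.sum_antidiagonal_eq_sum_range_succ_mk]
  exact Finset.sum_congr rfl fun j _ => by
    rw [coeff_one_sub_X_pow, PowerSeries.coeff_mk]

/-- Lemma 4.6: for `d ≥ 1` and `0 ≤ ℓ < d`, the identity of formal power series
`(1-x)^{d+1} ∑_{t ≥ 1} (2t)^ℓ (2t-1)^{d-ℓ} x^t = x · I_d(A_{d,ℓ}^{(2)})` holds, where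
`I_d(p) = x^d p(1/x)` is formalized as `Polynomial.reflect d`. -/
theorem h_star_reciprocal_halfopen_cube (d ℓ : ℕ) (hd : 1 ≤ d) (hℓ : ℓ < d)
    (A : Polynomial ℝ) (hA : IsColoredEulerian d 2 ℓ A) :
    ((1 - PowerSeries.X : PowerSeries ℝ) ^ (d + 1) *
        PowerSeries.mk fun t : ℕ =>
          if t = 0 then 0 else (2 * (t : ℝ)) ^ ℓ * (2 * (t : ℝ) - 1) ^ (d - ℓ)) =
      ((Polynomial.X * Polynomial.reflect d A : Polynomial ℝ) : PowerSeries ℝ) := by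
  classical
  set f : ℕ → ℝ := fun t => (2 * (t : ℝ)) ^ ℓ * (2 * (t : ℝ) + 1) ^ (d - ℓ) with hf
  set g : ℕ → ℝ := fun t =>
    if t = 0 then 0 else (2 * (t : ℝ)) ^ ℓ * (2 * (t : ℝ) - 1) ^ (d - ℓ) with hg
  have h0 : (A : PowerSeries ℝ) = (1 - PowerSeries.X) ^ (d + 1) *
      PowerSeries.mk (fun t : ℕ =>
        (((2 : ℕ) : ℝ) * t) ^ ℓ * (((2 : ℕ) : ℝ) * t + 1) ^ (d - ℓ)) := hA
  have hA' : (A : PowerSeries ℝ) = (1 - PowerSeries.X) ^ (d + 1) * PowerSeries.mk f := by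
    rw [h0]
    congr 1
  -- coefficient formula for A
  have hAc : ∀ m : ℕ, A.coeff m =
      ∑ j ∈ Finset.range (m + 1), (-1 : ℝ) ^ j * ((d + 1).choose j : ℝ) * f (m - j) := by
    intro m
    have := congrArg (PowerSeries.coeff m) hA'
    rw [Polynomial.coeff_coe, coeff_P_mul] at this
    exact this
  -- A has degree ≤ d
  have hdeg : ∀ m : ℕ, d + 1 ≤ m → A.coeff m = 0 := by
    intro m hm
    rw [hAc m]
    rw [← Finset.sum_subset (Finset.range_subset_range.mpr (show d + 2 ≤ m + 1 by omega))
      (fun j _ hj => by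
        rw [Nat.choose_eq_zero_of_lt (by simp at hj; omega), Nat.cast_zero, mul_zero, zero_mul])]
    rw [Finset.sum_congr rfl (fun j hj => ?_)]
    · exact prod_diff (d + 1) ℓ (d - ℓ) (by omega) 0 1 (m : ℝ)
    · have hj' : j ≤ d + 1 := Nat.lt_succ_iff.mp (Finset.mem_range.mp hj)
      have hcast : ((m - j : ℕ) : ℝ) = (m : ℝ) - j := Nat.cast_sub (by omega)
      simp only [hf]
      rw [hcast, add_zero]
  -- compare coefficients
  ext n
  rw [Polynomial.coeff_coe, coeff_P_mul]
  rcases n with _ | k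
  · simp [hg]
  · rw [Polynomial.coeff_X_mul, Polynomial.coeff_reflect]
    by_cases hk : k ≤ d
    · rw [Polynomial.revAt_le hk]
      set m : ℕ := d - k with hm
      -- the vanishing identity at x = m, split at m+1
      have hzero := prod_diff (d + 1) ℓ (d - ℓ) (by omega) 0 1 (m : ℝ)
      rw [Finset.range_eq_Ico,
        ← Finset.sum_Ico_consecutive _ (Nat.zero_le (m + 1)) (show m + 1 ≤ d + 2 by omega),
        ← Finset.range_eq_Ico, Finset.sum_Ico_eq_sum_range] at hzero
      have hfirst : (∑ j ∈ Finset.range (m + 1), (-1 : ℝ) ^ j * ((d + 1).choose j : ℝ) *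
          ((2 * ((m : ℝ) - j) + 0) ^ ℓ * (2 * ((m : ℝ) - j) + 1) ^ (d - ℓ))) = A.coeff m := by
        rw [hAc m]
        refine Finset.sum_congr rfl fun j hj => ?_
        have hj' : j ≤ m := Nat.lt_succ_iff.mp (Finset.mem_range.mp hj)
        have hcast : ((m - j : ℕ) : ℝ) = (m : ℝ) - j := Nat.cast_sub (by omega)
        simp only [hf]
        rw [hcast, add_zero]
      rw [hfirst] at hzero
      have hrange : d + 2 - (m + 1) = k + 1 := by omega
      rw [hrange] at hzero
      have htail : A.coeff m =
          ∑ i ∈ Finset.range (k + 1), -((-1 : ℝ) ^ (m + 1 + i) *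
            ((d + 1).choose (m + 1 + i) : ℝ) *
            ((2 * ((m : ℝ) - (m + 1 + i : ℕ)) + 0) ^ ℓ *
              (2 * ((m : ℝ) - (m + 1 + i : ℕ)) + 1) ^ (d - ℓ))) := by
        rw [Finset.sum_neg_distrib]
        linarith [hzero]
      rw [htail]
      -- peel the j = k+1 term of the left side (it vanishes since g 0 = 0)
      rw [Finset.sum_range_succ]
      have hg0 : g (k + 1 - (k + 1)) = 0 := by simp [hg]
      rw [hg0, mul_zero, add_zero]
      -- reflect the left sum
      rw [← Finset.sum_range_reflect]
      refine Finset.sum_congr rfl fun j hj => ?_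
      have hj' : j ≤ k := Nat.lt_succ_iff.mp (Finset.mem_range.mp hj)
      have h1 : k + 1 - 1 - j = k - j := by omega
      rw [h1]
      have h2 : k + 1 - (k - j) = j + 1 := by omega
      rw [h2]
      have hch : ((d + 1).choose (m + 1 + j) : ℝ) = ((d + 1).choose (k - j) : ℝ) := by
        rw [show m + 1 + j = d + 1 - (k - j) by omega, Nat.choose_symm (by omega)]
      have harg : (m : ℝ) - ((m + 1 + j : ℕ) : ℝ) = -(((j : ℝ) + 1)) := by
        push_cast; ring
      have hgv : g (j + 1) = (2 * ((j : ℝ) + 1)) ^ ℓ * (2 * ((j : ℝ) + 1) - 1) ^ (d - ℓ) := by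
        simp only [hg, if_neg (Nat.succ_ne_zero j)]
        push_cast; ring_nf
      rw [hch, harg, hgv]
      set y : ℝ := (j : ℝ) + 1 with hy
      have e1 : (2 * -y + 0) ^ ℓ = (-1 : ℝ) ^ ℓ * (2 * y) ^ ℓ := by
        rw [add_zero, show (2 : ℝ) * -y = -(2 * y) by ring, neg_pow]
      have e2 : (2 * -y + 1) ^ (d - ℓ) = (-1 : ℝ) ^ (d - ℓ) * (2 * y - 1) ^ (d - ℓ) := by
        rw [show (2 : ℝ) * -y + 1 = -(2 * y - 1) by ring, neg_pow]
      rw [e1, e2]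
      have hpow : -((-1 : ℝ) ^ (m + 1 + j) * ((-1 : ℝ) ^ ℓ * (-1 : ℝ) ^ (d - ℓ))) =
          (-1 : ℝ) ^ (k - j) := by
        rw [← pow_add, ← pow_add,
          show (m + 1 + j) + (ℓ + (d - ℓ)) = 2 * (d - k + j) + ((k - j) + 1) by omega,
          pow_add, pow_mul]
        norm_num [pow_succ]
      calc (-1 : ℝ) ^ (k - j) * ((d + 1).choose (k - j) : ℝ) *
            ((2 * y) ^ ℓ * (2 * y - 1) ^ (d - ℓ))
          = -((-1 : ℝ) ^ (m + 1 + j) * ((-1 : ℝ) ^ ℓ * (-1 : ℝ) ^ (d - ℓ))) *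
            ((d + 1).choose (k - j) : ℝ) * ((2 * y) ^ ℓ * (2 * y - 1) ^ (d - ℓ)) := by
            rw [hpow]
        _ = -((-1 : ℝ) ^ (m + 1 + j) * ((d + 1).choose (k - j) : ℝ) *
            ((-1 : ℝ) ^ ℓ * (2 * y) ^ ℓ * ((-1 : ℝ) ^ (d - ℓ) * (2 * y - 1) ^ (d - ℓ)))) := by
            ring
    · -- k > d : both sides vanish
      rw [Polynomial.revAt_eq_self_of_lt (by omega), hdeg k (by omega)]
      rw [← Finset.sum_subset (Finset.range_subset_range.mpr (show d + 2 ≤ k + 2 by omega))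
        (fun j _ hj => by
          rw [Nat.choose_eq_zero_of_lt (by simp at hj; omega), Nat.cast_zero, mul_zero, zero_mul])]
      rw [Finset.sum_congr rfl (fun j hj => ?_)]
      · exact prod_diff (d + 1) ℓ (d - ℓ) (by omega) 0 (-1) ((k : ℝ) + 1)
      · have hj' : j ≤ d + 1 := Nat.lt_succ_iff.mp (Finset.mem_range.mp hj)
        have h1 : k + 1 - j ≠ 0 := by omega
        have h2 : ((k + 1 - j : ℕ) : ℝ) = ((k : ℝ) + 1) - j := by
          rw [Nat.cast_sub (by omega)]; push_cast; ring
        simp only [hg, if_neg h1, h2]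
        rw [add_zero]
        ring_nf
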